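/- arXiv:0904.2871 — 2 statements merged into one kernel-verified Lean document; each statement's English description precedes it below -/
import Mathlib

section
/- Let D ⊂ ℂ be an open disk centered at a point of the real axis and let g : D → ℂ be analytic, real-valued on D ∩ ℝ, and have exactly two zeros in D counted with multiplicity. Suppose a, b, c are real numbers in D with a < c < b, g(a) ≥ 0, g(c) < 0, and g(b) ≥ 0. Then the two zeros of g in D are real and simple, one of them lies in [a,c) and the other lies in (c,b]. -/
noncomputable section

/-- If `g` is analytic on an open disk centered on the real axis, real-valued
on the real points of the disk, has exactly two zeros (with multiplicity,
i.e. `g = (z−z₁)(z−z₂)h` with `h` zero-free), and `g(a) ≥ 0 > g(c)`,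
`g(b) ≥ 0` for real `a < c < b` in the disk, then the two zeros are real,
simple, one lying in `[a,c)` and the other in `(c,b]`. -/
theorem statement_17
    (x₀ r : ℝ) (hr : 0 < r)
    (g : ℂ → ℂ)
    (hg : AnalyticOnNhd ℂ g (Metric.ball (x₀ : ℂ) r))
    (hreal : ∀ x : ℝ, (x : ℂ) ∈ Metric.ball (x₀ : ℂ) r → (g x).im = 0)
    (z₁ z₂ : ℂ) (h : ℂ → ℂ)
    (hz₁ : z₁ ∈ Metric.ball (x₀ : ℂ) r) (hz₂ : z₂ ∈ Metric.ball (x₀ : ℂ) r)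
    (hh : AnalyticOnNhd ℂ h (Metric.ball (x₀ : ℂ) r))
    (hh0 : ∀ z ∈ Metric.ball (x₀ : ℂ) r, h z ≠ 0)
    (hfac : ∀ z ∈ Metric.ball (x₀ : ℂ) r, g z = (z - z₁) * (z - z₂) * h z)
    (a c b : ℝ) (hac : a < c) (hcb : c < b)
    (ha : (a : ℂ) ∈ Metric.ball (x₀ : ℂ) r)
    (hc : (c : ℂ) ∈ Metric.ball (x₀ : ℂ) r)
    (hb : (b : ℂ) ∈ Metric.ball (x₀ : ℂ) r)
    (hga : 0 ≤ (g a).re) (hgc : (g c).re < 0) (hgb : 0 ≤ (g b).re) :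
    z₁.im = 0 ∧ z₂.im = 0 ∧ z₁ ≠ z₂ ∧
    ((z₁.re ∈ Set.Ico a c ∧ z₂.re ∈ Set.Ioc c b) ∨
      (z₂.re ∈ Set.Ico a c ∧ z₁.re ∈ Set.Ioc c b)) := by
  have hmem : ∀ x : ℝ, x ∈ Set.Icc a b → (x : ℂ) ∈ Metric.ball (x₀ : ℂ) r := by
    intro x hx
    have ha' := Metric.mem_ball.mp ha
    have hb' := Metric.mem_ball.mp hb
    have hd : ∀ u : ℝ, dist (u : ℂ) (x₀ : ℂ) = |u - x₀| := fun u => by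
      rw [Complex.dist_eq, ← Complex.ofReal_sub, Complex.norm_real, Real.norm_eq_abs]
    rw [Metric.mem_ball]
    rw [hd, abs_lt] at ha' hb' ⊢
    exact ⟨by linarith [hx.1], by linarith [hx.2]⟩
  set f : ℝ → ℝ := fun x => (g x).re with hf
  have hcont : ContinuousOn f (Set.Icc a b) := by
    apply Complex.continuous_re.comp_continuousOn
    exact (hg.continuousOn.comp Complex.continuous_ofReal.continuousOn
      (fun x hx => hmem x hx))
  have key : ∀ x : ℝ, x ∈ Set.Icc a b → f x = 0 → (x : ℂ) = z₁ ∨ (x : ℂ) = z₂ := by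
    intro x hx hre
    have hxD := hmem x hx
    have hg0 : g x = 0 := Complex.ext hre (hreal x hxD)
    have hfx := (hfac x hxD).symm
    rw [hg0] at hfx
    rcases mul_eq_zero.mp hfx with h1 | h2
    · rcases mul_eq_zero.mp h1 with h' | h'
      · exact Or.inl (sub_eq_zero.mp h')
      · exact Or.inr (sub_eq_zero.mp h')
    · exact absurd h2 (hh0 _ hxD)
  -- zero in [a, c)
  have hsub1 : Set.Icc a c ⊆ Set.Icc a b :=
    Set.Icc_subset_Icc le_rfl hcb.le
  have hsub2 : Set.Icc c b ⊆ Set.Icc a b :=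
    Set.Icc_subset_Icc hac.le le_rfl
  obtain ⟨x, hxmem, hfx⟩ : ∃ x ∈ Set.Icc a c, f x = 0 := by
    have := intermediate_value_Icc' hac.le (hcont.mono hsub1)
      (Set.mem_Icc.mpr ⟨hgc.le, hga⟩)
    obtain ⟨x, hx1, hx2⟩ := this
    exact ⟨x, hx1, hx2⟩
  obtain ⟨y, hymem, hfy⟩ : ∃ y ∈ Set.Icc c b, f y = 0 := by
    have := intermediate_value_Icc hcb.le (hcont.mono hsub2)
      (Set.mem_Icc.mpr ⟨hgc.le, hgb⟩)
    obtain ⟨y, hy1, hy2⟩ := this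
    exact ⟨y, hy1, hy2⟩
  have hxc : x < c := by
    rcases lt_or_eq_of_le hxmem.2 with h' | h'
    · exact h'
    · exfalso; rw [h'] at hfx; linarith
  have hcy : c < y := by
    rcases lt_or_eq_of_le hymem.1 with h' | h'
    · exact h'
    · exfalso; rw [← h'] at hfy; linarith
  have hx' := key x (hsub1 hxmem) hfx
  have hy' := key y (hsub2 hymem) hfy
  have hxy : x ≠ y := by linarith
  have hxyC : (x : ℂ) ≠ (y : ℂ) := by
    exact_mod_cast hxy
  rcases hx' with h1 | h1 <;> rcases hy' with h2 | h2
  · exact absurd (h1.trans h2.symm) hxyC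
  · refine ⟨by rw [← h1]; simp, by rw [← h2]; simp, ?_, Or.inl ⟨?_, ?_⟩⟩
    · rw [← h1, ← h2]; exact hxyC
    · rw [← h1]; simpa using ⟨hxmem.1, hxc⟩
    · rw [← h2]; simpa using ⟨hcy, hymem.2⟩
  · refine ⟨by rw [← h2]; simp, by rw [← h1]; simp, ?_, Or.inr ⟨?_, ?_⟩⟩
    · rw [← h1, ← h2]; exact hxyC.symm
    · rw [← h1]; simpa using ⟨hxmem.1, hxc⟩
    · rw [← h2]; simpa using ⟨hcy, hymem.2⟩
  · exact absurd (h1.trans h2.symm) hxyC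
end
end

section
/- Let a < b be real numbers and let F be a real-valued function that is real-analytic on an open interval containing [a,b], with F(a) > 0 and F(b) > 0. Then F has only finitely many zeros in (a,b), and the sum of their multiplicities (the orders of vanishing of F at these zeros) is an even number. -/
open Filter Set
open scoped Topology

/-- If `F` is analytic at `c` with finite order `n`, then the `n`-th iterated derivative
is nonzero and all lower ones vanish. -/
lemma aux_deriv_char {F : ℝ → ℝ} {c : ℝ} (h : AnalyticAt ℝ F c) (n : ℕ)
    (hn : analyticOrderAt F c = (n : ℕ∞)) :
    iteratedDeriv n F c ≠ 0 ∧ ∀ k, k < n → iteratedDeriv k F c = 0 := by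
  obtain ⟨p, hp⟩ := id h
  have hp0 : p ≠ 0 := by
    intro hp0
    have : ∀ᶠ z in 𝓝 c, F z = 0 := HasFPowerSeriesAt.eventually_eq_zero (hp0 ▸ hp)
    rw [← analyticOrderAt_eq_top] at this
    simp [hn] at this
  -- n = p.order
  have hord : n = p.order := by
    have h1 := (h.analyticOrderAt_eq_natCast (n := n)).mp hn
    have h2 : ∃ g, AnalyticAt ℝ g c ∧ g c ≠ 0 ∧
        ∀ᶠ z in 𝓝 c, F z = (z - c) ^ p.order • g z :=
      ⟨_, ⟨_, hp.has_fpower_series_iterate_dslope_fslope p.order⟩,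
        hp.iterate_dslope_fslope_ne_zero hp0, Filter.Eventually.of_forall hp.eq_pow_order_mul_iterate_dslope⟩
    exact AnalyticAt.unique_eventuallyEq_pow_smul_nonzero h1 h2
  obtain ⟨r, hball⟩ := hp
  have key : ∀ k : ℕ, iteratedDeriv k F c = (k.factorial : ℝ) * p.coeff k := by
    intro k
    have := hball.factorial_smul (1 : ℝ) k
    rw [iteratedDeriv_eq_iteratedFDeriv, ← this]
    rw [FormalMultilinearSeries.coeff, nsmul_eq_mul]
    norm_num
  constructor
  · rw [key n]
    have hfac : (0:ℝ) < n.factorial := by positivity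
    have : p.coeff n ≠ 0 := by
      simp only [ne_eq, FormalMultilinearSeries.coeff_eq_zero]
      exact hord ▸ FormalMultilinearSeries.apply_order_ne_zero hp0
    exact fun hc0 => this (by nlinarith [key n])
  · intro k hk
    rw [key k]
    have : p.coeff k = 0 := by
      rw [FormalMultilinearSeries.coeff_eq_zero]
      exact FormalMultilinearSeries.apply_eq_zero_of_lt_order (hord ▸ hk)
    simp [this]

lemma aux_ivt {f : ℝ → ℝ} {u v : ℝ} (huv : u ≤ v) (hc : ContinuousOn f (Set.Icc u v))
    (h : ∀ x ∈ Set.Icc u v, f x ≠ 0) : 0 < f u * f v := by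
  have hu : f u ≠ 0 := h u ⟨le_refl u, huv⟩
  have hv : f v ≠ 0 := h v ⟨huv, le_refl v⟩
  rcases hu.lt_or_gt with hu' | hu' <;> rcases hv.lt_or_gt with hv' | hv'
  · exact mul_pos_of_neg_of_neg hu' hv'
  · exfalso
    obtain ⟨x, hx, hx0⟩ := intermediate_value_Icc huv hc ⟨hu'.le, hv'.le⟩
    exact h x hx hx0
  · exfalso
    obtain ⟨x, hx, hx0⟩ := intermediate_value_Icc' huv hc ⟨hv'.le, hu'.le⟩
    exact h x hx hx0
  · exact mul_pos hu' hv'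

lemma aux_sign_mul_pos {x y : ℝ} (hx : x ≠ 0) (hy : y ≠ 0) :
    0 < x * y ↔ (0 < x ↔ 0 < y) := by
  rcases hx.lt_or_gt with h | h <;> rcases hy.lt_or_gt with h' | h'
  · simp [mul_pos_of_neg_of_neg h h', h.not_gt, h'.not_gt]
  · simp [(mul_neg_of_neg_of_pos h h').not_gt, h.not_gt, h']
  · simp [(mul_neg_of_pos_of_neg h h').not_gt, h, h'.not_gt]
  · simp [mul_pos h h', h, h']

lemma aux_three {x y z : ℝ} (hx : x ≠ 0) (hy : y ≠ 0) (hz : z ≠ 0) :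
    (0 < z * y ↔ 0 < x * z) ↔ 0 < x * y := by
  rw [aux_sign_mul_pos hz hy, aux_sign_mul_pos hx hz, aux_sign_mul_pos hx hy]
  tauto

/-- Main induction: parity of the sum of multiplicities vs sign agreement of endpoints. -/
lemma aux_key (n : ℕ) : ∀ (S : Finset ℝ) (a b : ℝ) (F : ℝ → ℝ) (m : ℝ → ℕ),
    S.card = n → a < b →
    ContinuousOn F (Set.Icc a b) →
    (∀ x ∈ S, x ∈ Set.Ioo a b) →
    (∀ x ∈ Set.Ioo a b, (F x = 0 ↔ x ∈ S)) →
    F a ≠ 0 → F b ≠ 0 →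
    (∀ x ∈ S, ∃ g : ℝ → ℝ, ContinuousAt g x ∧ g x ≠ 0 ∧
      ∀ᶠ z in 𝓝 x, F z = (z - x) ^ (m x) * g z) →
    (Even (∑ x ∈ S, m x) ↔ 0 < F a * F b) := by
  induction n with
  | zero =>
    intro S a b F m hcard hab hcont hsub hzero hFa hFb _
    rw [Finset.card_eq_zero] at hcard
    subst hcard
    simp only [Finset.sum_empty, Even.zero, true_iff]
    refine aux_ivt hab.le hcont fun x hx hx0 => ?_
    rcases eq_or_lt_of_le hx.1 with h1 | h1
    · exact hFa (h1 ▸ hx0)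
    rcases eq_or_lt_of_le hx.2 with h2 | h2
    · exact hFb (h2 ▸ hx0)
    exact absurd ((hzero x ⟨h1, h2⟩).mp hx0) (by simp)
  | succ n ih =>
    intro S a b F m hcard hab hcont hsub hzero hFa hFb hfact
    have hSne : S.Nonempty := Finset.card_pos.mp (hcard ▸ n.succ_pos)
    set c := S.max' hSne with hc
    have hcS : c ∈ S := S.max'_mem hSne
    have hcab : c ∈ Set.Ioo a b := hsub c hcS
    obtain ⟨g, hgc, hgne, hev⟩ := hfact c hcS
    -- δ : factorization holds and g has constant sign on ball c δ
    have hg2 : ∀ᶠ z in 𝓝 c, 0 < g z * g c := by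
      have : ContinuousAt (fun z => g z * g c) c := hgc.mul continuousAt_const
      have h0 : (0:ℝ) < g c * g c := mul_self_pos.mpr hgne
      exact this.eventually (eventually_gt_nhds h0)
    obtain ⟨δ, hδpos, hδ⟩ := Metric.eventually_nhds_iff.mp (hev.and hg2)
    -- t : strict upper bound for a and all other elements of S, below c
    set T : Finset ℝ := insert a (S.erase c) with hT
    have hTne : T.Nonempty := ⟨a, Finset.mem_insert_self _ _⟩
    set t := T.max' hTne with ht
    have htc : t < c := by
      have := T.max'_mem hTne
      rcases Finset.mem_insert.mp this with h | h
      · rw [ht, h]; exact hcab.1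
      · exact lt_of_le_of_ne (S.le_max' _ (Finset.mem_of_mem_erase h))
          (Finset.ne_of_mem_erase h)
    have hat : a ≤ t := T.le_max' a (Finset.mem_insert_self _ _)
    -- choose b' ∈ (max t (c - δ), c)
    set b' := (max t (c - δ) + c) / 2 with hb'
    have hmaxc : max t (c - δ) < c := max_lt htc (by linarith)
    have hb'1 : max t (c - δ) < b' := by simp only [hb']; linarith
    have hb'2 : b' < c := by simp only [hb']; linarith
    have htb' : t < b' := lt_of_le_of_lt (le_max_left _ _) hb'1
    have hab' : a < b' := lt_of_le_of_lt hat htb'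
    have hb'b : b' < b := hb'2.trans hcab.2
    have hb'ball : dist b' c < δ := by
      rw [Real.dist_eq, abs_of_nonpos (by linarith)]
      have := lt_of_le_of_lt (le_max_right t (c - δ)) hb'1
      linarith
    have hb'notS : b' ∉ S := by
      intro hmem
      have : b' ∈ S.erase c := Finset.mem_erase.mpr ⟨hb'2.ne, hmem⟩
      exact absurd (T.le_max' b' (Finset.mem_insert_of_mem this)) htb'.not_ge
    have hFb' : F b' ≠ 0 := fun h0 =>
      hb'notS ((hzero b' ⟨hab', hb'b⟩).mp h0)
    -- choose r ∈ (c, min b (c+δ))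
    set r := (c + min b (c + δ)) / 2 with hr
    have hcr : c < min b (c + δ) := lt_min hcab.2 (by linarith)
    have hr1 : c < r := by simp only [hr]; linarith
    have hr2 : r < min b (c + δ) := by simp only [hr]; linarith
    have hrb : r < b := hr2.trans_le (min_le_left _ _)
    have hrball : dist r c < δ := by
      rw [Real.dist_eq, abs_of_nonneg (by linarith)]
      have := hr2.trans_le (min_le_right b (c + δ))
      linarith
    obtain ⟨hFr_eq, hgr⟩ := hδ hrball
    obtain ⟨hFb'_eq, hgb'⟩ := hδ hb'ball
    -- F has no zeros on [r, b]
    have hFrb : ∀ x ∈ Set.Icc r b, F x ≠ 0 := by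
      intro x hx h0
      rcases eq_or_lt_of_le hx.2 with h2 | h2
      · exact hFb (h2 ▸ h0)
      have hxS : x ∈ S := (hzero x ⟨lt_trans hcab.1 (lt_of_lt_of_le hr1 hx.1), h2⟩).mp h0
      exact absurd (S.le_max' x hxS) (by have := hx.1; simp only [← hc]; linarith)
    have hFrFb : 0 < F r * F b :=
      aux_ivt (le_of_lt hrb) (hcont.mono (Set.Icc_subset_Icc (by linarith [hcab.1]) le_rfl)) hFrb
    -- sign of F r : F r = (r-c)^m * g r with (r-c) > 0
    have hFr_pos : 0 < F r * g c := by
      rw [hFr_eq]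
      have h1 : (0:ℝ) < (r - c) ^ m c := pow_pos (by linarith) _
      calc (0:ℝ) < (r - c) ^ m c * (g r * g c) := mul_pos h1 hgr
        _ = (r - c) ^ m c * g r * g c := by ring
    have hgcne : g c ≠ 0 := hgne
    have hFrne : F r ≠ 0 := hFrb r ⟨le_refl r, hrb.le⟩
    -- g c and F b have the same sign
    have hgcFb : 0 < g c * F b := by
      rw [aux_sign_mul_pos hgcne hFb]
      rw [aux_sign_mul_pos hFrne hgcne] at hFr_pos
      rw [aux_sign_mul_pos hFrne hFb] at hFrFb
      tauto
    -- sign of F b' vs F b : F b' = (b'-c)^m * g b', (b'-c) < 0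
    have hgb'Fb : 0 < g b' * F b := by
      have hgb'ne : g b' ≠ 0 := fun h0 => by simp [h0] at hgb'
      rw [aux_sign_mul_pos hgb'ne hFb]
      rw [aux_sign_mul_pos hgb'ne hgcne] at hgb'
      rw [aux_sign_mul_pos hgcne hFb] at hgcFb
      tauto
    have hkey : 0 < F b' * F b ↔ Even (m c) := by
      rw [hFb'_eq, mul_assoc]
      constructor
      · intro h
        by_contra hodd
        have : (b' - c) ^ m c < 0 :=
          Odd.pow_neg (Nat.not_even_iff_odd.mp hodd) (by linarith)
        nlinarith
      · intro heven
        have : 0 < (b' - c) ^ m c := heven.pow_pos (by intro h; linarith [sub_eq_zero.mp h])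
        exact mul_pos this hgb'Fb
    -- apply IH on [a, b'] with S.erase c
    have hcard' : (S.erase c).card = n := by
      rw [Finset.card_erase_of_mem hcS, hcard]; rfl
    have hsub' : ∀ x ∈ S.erase c, x ∈ Set.Ioo a b' := by
      intro x hx
      refine ⟨(hsub x (Finset.mem_of_mem_erase hx)).1, ?_⟩
      exact lt_of_le_of_lt (T.le_max' x (Finset.mem_insert_of_mem hx)) htb'
    have hzero' : ∀ x ∈ Set.Ioo a b', (F x = 0 ↔ x ∈ S.erase c) := by
      intro x hx
      rw [hzero x ⟨hx.1, hx.2.trans hb'b⟩, Finset.mem_erase]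
      constructor
      · intro hxS
        exact ⟨ne_of_lt (hx.2.trans hb'2), hxS⟩
      · exact And.right
    have hIH := ih (S.erase c) a b' F m hcard' hab'
      (hcont.mono (Set.Icc_subset_Icc le_rfl hb'b.le)) hsub' hzero' hFa hFb'
      (fun x hx => hfact x (Finset.mem_of_mem_erase hx))
    -- assemble
    have hsum : ∑ x ∈ S, m x = m c + ∑ x ∈ S.erase c, m x := by
      rw [add_comm, Finset.sum_erase_add S m hcS]
    rw [hsum]
    rw [Nat.even_add]
    rw [hIH]
    rw [← hkey]
    exact aux_three hFa hFb hFb'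

noncomputable section

/-- If `F` is real-analytic on an open interval containing `[a,b]` with
`F(a) > 0` and `F(b) > 0`, then `F` has finitely many zeros in `(a,b)` and the
sum of their multiplicities is even. -/
theorem statement_18
    (a b : ℝ) (hab : a < b)
    (I : Set ℝ) (hI : IsOpen I) (hIab : Set.Icc a b ⊆ I)
    (F : ℝ → ℝ) (hF : AnalyticOnNhd ℝ F I)
    (hFa : 0 < F a) (hFb : 0 < F b) :
    ∃ (S : Finset ℝ) (m : ℝ → ℕ),
      (∀ x ∈ S, x ∈ Set.Ioo a b) ∧
      (∀ x ∈ Set.Ioo a b, (F x = 0 ↔ x ∈ S)) ∧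
      (∀ x ∈ S, 0 < m x ∧ iteratedDeriv (m x) F x ≠ 0 ∧
        ∀ k : ℕ, k < m x → iteratedDeriv k F x = 0) ∧
      Even (∑ x ∈ S, m x) := by
  classical
  obtain ⟨δ, hδpos, hδ⟩ := isCompact_Icc.exists_thickening_subset_open hI hIab
  set J := Set.Ioo (a - δ) (b + δ) with hJ
  have hJI : J ⊆ I := by
    intro x hx
    apply hδ
    rw [Metric.mem_thickening_iff]
    refine ⟨max a (min x b), ⟨le_max_left _ _, max_le hab.le (min_le_right _ _)⟩, ?_⟩
    obtain ⟨hx1, hx2⟩ := hx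
    rw [Real.dist_eq, abs_lt]
    rcases le_total x a with h1 | h1 <;> rcases le_total x b with h2 | h2 <;>
      simp [min_eq_left, min_eq_right, max_eq_left, max_eq_right, h1, h2, hab.le] <;>
      first
        | linarith
        | (constructor <;> linarith)
  have hJF : AnalyticOnNhd ℝ F J := fun x hx => hF x (hJI hx)
  have hIccJ : Set.Icc a b ⊆ J :=
    Set.Icc_subset_Ioo (by linarith) (by linarith)
  have haJ : a ∈ J := hIccJ ⟨le_refl a, hab.le⟩
  have hne : ∀ x ∈ J, ¬ (∀ᶠ z in 𝓝 x, F z = 0) := by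
    intro x hx hev
    have heq : F =ᶠ[𝓝 x] 0 := hev
    have := hJF.eqOn_zero_of_preconnected_of_eventuallyEq_zero isPreconnected_Ioo hx heq
    exact hFa.ne' (this haJ)
  have hcont : ContinuousOn F (Set.Icc a b) :=
    fun x hx => (hF x (hIab hx)).continuousAt.continuousWithinAt
  -- finiteness of the zero set
  have hfin : {x | x ∈ Set.Icc a b ∧ F x = 0}.Finite := by
    by_contra hinf
    have hinf' : {x | x ∈ Set.Icc a b ∧ F x = 0}.Infinite := hinf
    obtain ⟨z, hzK, hz⟩ := hinf'.exists_accPt_of_subset_isCompact isCompact_Icc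
      (fun x hx => hx.1)
    rw [accPt_iff_frequently] at hz
    have hfreq : ∃ᶠ y in 𝓝[≠] z, F y = 0 := by
      rw [frequently_nhdsWithin_iff]
      exact hz.mono fun y hy => ⟨hy.2.2, hy.1⟩
    have := (hJF z (hIccJ hzK)).frequently_zero_iff_eventually_zero.mp hfreq
    exact hne z (hIccJ hzK) this
  have hfin2 : {x | x ∈ Set.Ioo a b ∧ F x = 0}.Finite :=
    hfin.subset fun x hx => ⟨Set.Ioo_subset_Icc_self hx.1, hx.2⟩
  set S : Finset ℝ := hfin2.toFinset with hS
  have hmemS : ∀ x, x ∈ S ↔ x ∈ Set.Ioo a b ∧ F x = 0 := by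
    intro x; rw [hS, Set.Finite.mem_toFinset]; rfl
  set m : ℝ → ℕ := fun x => if h : AnalyticAt ℝ F x then (analyticOrderAt F x).toNat else 0 with hm
  -- properties of m at points of S
  have hordS : ∀ x ∈ S, ∃ h : AnalyticAt ℝ F x, analyticOrderAt F x = (m x : ℕ∞) ∧ 0 < m x := by
    intro x hx
    rw [hmemS] at hx
    have hxJ : x ∈ J := hIccJ (Set.Ioo_subset_Icc_self hx.1)
    have han : AnalyticAt ℝ F x := hJF x hxJ
    have htop : analyticOrderAt F x ≠ ⊤ := by
      intro h
      exact hne x hxJ (analyticOrderAt_eq_top.mp h)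
    refine ⟨han, ?_, ?_⟩
    · rw [hm]
      simp only [dif_pos han]
      exact (ENat.coe_toNat htop).symm
    · rw [hm]
      simp only [dif_pos han]
      rcases Nat.eq_zero_or_pos (analyticOrderAt F x).toNat |>.symm with h | h
      · exact h
      exfalso
      have h0 : analyticOrderAt F x = (0 : ℕ) := by
        rw [← h, ENat.coe_toNat htop]
      obtain ⟨g, hg, hgne, hev⟩ := (han.analyticOrderAt_eq_natCast (n := 0)).mp h0
      have := hev.self_of_nhds
      simp [hx.2] at this
      exact hgne this.symm
  refine ⟨S, m, fun x hx => ((hmemS x).mp hx).1,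
    fun x hx => ⟨fun h0 => (hmemS x).mpr ⟨hx, h0⟩, fun hS' => ((hmemS x).mp hS').2⟩,
    ?_, ?_⟩
  · intro x hx
    obtain ⟨han, hord, hpos⟩ := hordS x hx
    obtain ⟨h1, h2⟩ := aux_deriv_char han (m x) hord
    exact ⟨hpos, h1, h2⟩
  · rw [aux_key S.card S a b F m rfl hab hcont
      (fun x hx => ((hmemS x).mp hx).1)
      (fun x hx => ⟨fun h0 => (hmemS x).mpr ⟨hx, h0⟩, fun hS' => ((hmemS x).mp hS').2⟩)
      hFa.ne' hFb.ne' ?_]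
    · exact mul_pos hFa hFb
    · intro x hx
      obtain ⟨han, hord, _⟩ := hordS x hx
      obtain ⟨g, hg, hgne, hev⟩ := (han.analyticOrderAt_eq_natCast (n := m x)).mp hord
      exact ⟨g, hg.continuousAt, hgne, hev.mono fun z hz => by
        rw [hz]; simp [smul_eq_mul]⟩
end
end
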